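/- Let α ∈ [0, 2/3) and for integers i ≥ 1 define p_i = (2/4^i)·((2i−2)!/((i−1)!·(i+1)!))·((1−3α/2)i + 1). Then i^{3/2}·p_i converges to (1 − 3α/2)/(2√π) as i → ∞; in particular p_i ~ ((1−3α/2)/(2√π))·i^{−3/2}. -/

import Mathlib

open Filter

open Real Topology


lemma cb_stirling (n : ℕ) (hn : 1 ≤ n) :
    (Nat.centralBinom n : ℝ) * Real.sqrt n / 4 ^ n
      = Stirling.stirlingSeq (2 * n) / (Stirling.stirlingSeq n) ^ 2 := by
  have hn0 : (0:ℝ) < n := by exact_mod_cast hn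
  have hE : (0:ℝ) < Real.exp 1 := Real.exp_pos 1
  have h2n : ((2*n).factorial : ℝ) = Nat.centralBinom n * n.factorial * n.factorial := by
    have := Nat.choose_mul_factorial_mul_factorial (show n ≤ 2*n by omega)
    rw [show 2*n - n = n by omega] at this
    rw [Nat.centralBinom]
    exact_mod_cast this.symm
  have hsq : Real.sqrt (2*(2*n:ℕ) : ℝ) = 2 * Real.sqrt n := by
    push_cast
    rw [show (2:ℝ)*(2*n) = 4 * n by ring, Real.sqrt_mul (by norm_num) ,
      show Real.sqrt 4 = 2 by rw [show (4:ℝ) = 2^2 by norm_num, Real.sqrt_sq two_pos.le]]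
  have hpow : (((2*n:ℕ):ℝ)/Real.exp 1)^(2*n) = 4^n * ((n:ℝ)/Real.exp 1)^(2*n) := by
    push_cast
    rw [show (2*(n:ℝ))/Real.exp 1 = 2 * ((n:ℝ)/Real.exp 1) by ring, mul_pow,
      show (2:ℝ)^(2*n) = 4^n by rw [pow_mul]; norm_num]
  simp only [Stirling.stirlingSeq, h2n, hsq, hpow]
  have hs : Real.sqrt (2*n:ℝ) ≠ 0 := by positivity
  have hsn : Real.sqrt (n:ℝ) ≠ 0 := by positivity
  have hf : (n.factorial : ℝ) ≠ 0 := by exact_mod_cast n.factorial_ne_zero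
  have hp4 : (4:ℝ)^n ≠ 0 := by positivity
  have hpe : ((n:ℝ)/Real.exp 1)^(2*n) ≠ 0 := by positivity
  have hpe' : ((n:ℝ)/Real.exp 1)^n ≠ 0 := by positivity
  field_simp
  ring_nf
  have he : Real.exp ((n:ℝ) * 2) = Real.exp (n:ℝ) ^ 2 := by
    rw [← Real.exp_nat_mul]; norm_num [mul_comm]
  rw [Real.sq_sqrt hn0.le, Real.sq_sqrt (by positivity : (0:ℝ) ≤ (n:ℝ)*2)]
  ring

lemma cb_tendsto :
    Tendsto (fun n : ℕ => (Nat.centralBinom n : ℝ) * Real.sqrt n / 4 ^ n) atTop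
      (𝓝 (Real.sqrt Real.pi)⁻¹) := by
  have hπ : Real.sqrt Real.pi ≠ 0 := by positivity
  have h2 : Tendsto (fun n : ℕ => Stirling.stirlingSeq (2 * n)) atTop (𝓝 (Real.sqrt Real.pi)) :=
    Stirling.tendsto_stirlingSeq_sqrt_pi.comp
      (tendsto_atTop_mono (fun n => by simp; omega) tendsto_id)
  have hd := h2.div (Stirling.tendsto_stirlingSeq_sqrt_pi.pow 2)
    (by positivity : (Real.sqrt Real.pi) ^ 2 ≠ 0)
  have heq : Real.sqrt Real.pi / (Real.sqrt Real.pi) ^ 2 = (Real.sqrt Real.pi)⁻¹ := by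
    rw [sq]; field_simp
  rw [heq] at hd
  refine hd.congr' ?_
  filter_upwards [eventually_ge_atTop 1] with n hn
  exact (cb_stirling n hn).symm

theorem subcritical_pi_asymptotics
    (α : ℝ) (hα0 : 0 ≤ α) (hα1 : α < 2 / 3)
    (p : ℕ → ℝ)
    (hp : ∀ i : ℕ, 1 ≤ i →
      p i = 2 / 4 ^ i *
        ((Nat.factorial (2 * i - 2) : ℝ) /
          ((Nat.factorial (i - 1) : ℝ) * (Nat.factorial (i + 1) : ℝ))) *
        ((1 - 3 * α / 2) * (i : ℝ) + 1)) :
    Tendsto (fun i : ℕ => (i : ℝ) ^ ((3 : ℝ) / 2) * p i) atTop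
      (nhds ((1 - 3 * α / 2) / (2 * Real.sqrt Real.pi))) := by
  set c : ℝ := 1 - 3 * α / 2 with hc
  rw [← tendsto_add_atTop_iff_nat 1]
  have hπ : Real.sqrt Real.pi ≠ 0 := by positivity
  have h1 : Tendsto (fun n : ℕ => Real.sqrt ((n:ℝ)+1) / Real.sqrt n) atTop (𝓝 1) := by
    have h0 : Tendsto (fun n : ℕ => 1 + 1/(n:ℝ)) atTop (𝓝 1) := by
      simpa using (tendsto_const_nhds (α := ℕ) (x := (1:ℝ))).add
        tendsto_one_div_atTop_nhds_zero_nat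
    have := (Real.continuous_sqrt.tendsto 1).comp h0
    rw [Real.sqrt_one] at this
    refine this.congr' ?_
    filter_upwards [eventually_ge_atTop 1] with n hn
    have hn0 : (0:ℝ) < n := by exact_mod_cast hn
    show Real.sqrt (1 + 1/(n:ℝ)) = Real.sqrt ((n:ℝ)+1) / Real.sqrt n
    rw [show (1:ℝ) + 1/(n:ℝ) = ((n:ℝ)+1)/n by field_simp,
      Real.sqrt_div (by positivity)]
  have h3 : Tendsto (fun n : ℕ => (c*((n:ℝ)+1)+1)/((n:ℝ)+2)) atTop (𝓝 c) := by
    have h4 : Tendsto (fun n : ℕ => 1/((n:ℝ)+2)) atTop (𝓝 0) := by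
      have := (tendsto_add_atTop_iff_nat 1).2 (tendsto_one_div_add_atTop_nhds_zero_nat :
        Tendsto (fun n : ℕ => 1 / ((n : ℝ) + 1)) atTop (𝓝 0))
      refine this.congr fun n => ?_
      push_cast; ring_nf
    have h0 : Tendsto (fun n : ℕ => c + (1-c) * (1/((n:ℝ)+2))) atTop (𝓝 (c + (1-c)*0)) :=
      tendsto_const_nhds.add (tendsto_const_nhds.mul h4)
    rw [mul_zero, add_zero] at h0
    refine h0.congr fun n => ?_
    have : ((n:ℝ)+2) ≠ 0 := by positivity
    field_simp
    ring
  have hr : Tendsto (fun n : ℕ =>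
      (1/2 : ℝ) * (Real.sqrt ((n:ℝ)+1) / Real.sqrt n) * ((c*((n:ℝ)+1)+1)/((n:ℝ)+2)))
      atTop (𝓝 ((1/2) * 1 * c)) :=
    (tendsto_const_nhds.mul h1).mul h3
  have hfull := cb_tendsto.mul hr
  have hconst : (Real.sqrt Real.pi)⁻¹ * ((1/2) * 1 * c) = c / (2 * Real.sqrt Real.pi) := by
    rw [eq_div_iff (by positivity : (2:ℝ) * Real.sqrt Real.pi ≠ 0)]
    have h2 : Real.sqrt Real.pi * (Real.sqrt Real.pi)⁻¹ = 1 := mul_inv_cancel₀ hπ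
    calc (Real.sqrt Real.pi)⁻¹ * ((1/2)*1*c) * (2 * Real.sqrt Real.pi)
        = (Real.sqrt Real.pi * (Real.sqrt Real.pi)⁻¹) * c := by ring
      _ = c := by rw [h2, one_mul]
  rw [hconst] at hfull
  refine hfull.congr' ?_
  filter_upwards [eventually_ge_atTop 1] with n hn
  have hn0 : (0:ℝ) < n := by exact_mod_cast hn
  rw [hp (n+1) (by omega), show 2*(n+1)-2 = 2*n from by omega, show n+1-1 = n from by omega]
  have h2n : ((2*n).factorial : ℝ) = Nat.centralBinom n * n.factorial * n.factorial := by
    have := Nat.choose_mul_factorial_mul_factorial (show n ≤ 2*n by omega)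
    rw [show 2*n - n = n by omega] at this
    rw [Nat.centralBinom]
    exact_mod_cast this.symm
  have hfs : ((n+1+1).factorial : ℝ) = ((n:ℝ)+2)*(((n:ℝ)+1)*(n.factorial:ℝ)) := by
    rw [Nat.factorial_succ, Nat.factorial_succ]; push_cast; ring
  have hrpow : ((n:ℝ)+1) ^ ((3:ℝ)/2) = ((n:ℝ)+1) * Real.sqrt ((n:ℝ)+1) := by
    rw [show ((3:ℝ)/2) = 1 + 1/2 by norm_num, Real.rpow_add (by positivity), Real.rpow_one,
      ← Real.sqrt_eq_rpow]
  have hsn : Real.sqrt (n:ℝ) ≠ 0 := by positivity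
  have hf : (n.factorial : ℝ) ≠ 0 := by exact_mod_cast n.factorial_ne_zero
  have hp4 : (4:ℝ)^n ≠ 0 := by positivity
  push_cast
  rw [h2n, hfs, hrpow]
  field_simp
  ring
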